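/- For all 0 < k < 2, J > 0 and 0 < M₁ ≤ M₂, the energy infima satisfy the scaling inequality I^k_{M₂,J} ≤ (M₂/M₁) · I^k_{M₁,J}. -/

import Mathlib

open MeasureTheory Real Filter Topology
open scoped ENNReal

noncomputable section

/-- Euclidean 3-space. -/
abbrev E3 := EuclideanSpace ℝ (Fin 3)

/-- `φ` belongs to (a C¹ surrogate of) the space `D¹(ℝ³)`: it is continuously
differentiable, its gradient is square integrable and it vanishes at infinity in
the sense that `{|φ| > a}` has finite measure for every `a > 0`. -/
def IsPotential (φ : E3 → ℝ) : Prop :=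
  ContDiff ℝ 1 φ ∧ (∫⁻ x : E3, ENNReal.ofReal (‖gradient φ x‖ ^ 2)) < ⊤ ∧
    ∀ a : ℝ, 0 < a → volume {x : E3 | a < |φ x|} < ⊤

/-- `f ∈ Γ^k_{M,J}`: `f` is measurable, a.e. nonnegative, with `‖f‖_{L¹} = M` and
`‖f‖_{L^{1+1/k}} ≤ J` (in particular `f ∈ L¹ ∩ L^{1+1/k}`). -/
def InGamma (k M J : ℝ) (f : E3 → E3 → ℝ) : Prop :=
  Measurable (Function.uncurry f) ∧
  (∀ᵐ z : E3 × E3, 0 ≤ f z.1 z.2) ∧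
  (∫⁻ z : E3 × E3, ENNReal.ofReal (f z.1 z.2)) = ENNReal.ofReal M ∧
  eLpNorm (Function.uncurry f) (ENNReal.ofReal (1 + 1/k)) volume ≤ ENNReal.ofReal J

/-- Kinetic energy `E_kin(f,φ) = ∫∫ √(e^{2φ(x)}+|p|²) f(x,p) dp dx` (value in `[0,∞]`). -/
def kinE (f : E3 → E3 → ℝ) (φ : E3 → ℝ) : ℝ≥0∞ :=
  ∫⁻ z : E3 × E3, ENNReal.ofReal (Real.sqrt (Real.exp (2 * φ z.1) + ‖z.2‖ ^ 2) * f z.1 z.2)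

/-- Energy functional `𝓔(f,φ) = E_kin(f,φ) + (1/2)∫ |∇φ|²` (value in `[0,∞]`). -/
def energy (f : E3 → E3 → ℝ) (φ : E3 → ℝ) : ℝ≥0∞ :=
  kinE f φ + (∫⁻ x : E3, ENNReal.ofReal (‖gradient φ x‖ ^ 2)) / 2

/-- `(f,φ)` is admissible: `f ∈ Γ^k_{M,J}`, `φ` is a potential and
`∫∫ √(1+|p|²) f dp dx < ∞`. -/
def Admissible (k M J : ℝ) (f : E3 → E3 → ℝ) (φ : E3 → ℝ) : Prop :=
  InGamma k M J f ∧ IsPotential φ ∧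
  (∫⁻ z : E3 × E3, ENNReal.ofReal (Real.sqrt (1 + ‖z.2‖ ^ 2) * f z.1 z.2)) < ⊤

/-- The energy infimum `I^k_{M,J} = inf {𝓔(f,φ) : (f,φ) admissible}`. -/
def energyInf (k M J : ℝ) : ℝ≥0∞ :=
  sInf { e : ℝ≥0∞ | ∃ f φ, Admissible k M J f φ ∧ e = energy f φ }


section AuxScaling

lemma lintegral_comp_smul_E3 {a : ℝ} (ha : 0 < a) (H : E3 → ℝ≥0∞) (hH : Measurable H) :
    ∫⁻ x : E3, H (a • x) = ENNReal.ofReal ((a ^ 3)⁻¹) * ∫⁻ x, H x := by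
  have hmap := Measure.map_addHaar_smul (volume : Measure E3) (ne_of_gt ha)
  rw [← lintegral_map hH (measurable_const_smul a), hmap, lintegral_smul_measure]
  congr 2
  rw [finrank_euclideanSpace_fin, abs_of_pos (by positivity)]

lemma lintegral_comp_smul_prodE3 {a : ℝ} (ha : 0 < a) (H : E3 × E3 → ℝ≥0∞) (hH : Measurable H) :
    ∫⁻ z : E3 × E3, H (a • z.1, z.2) = ENNReal.ofReal ((a ^ 3)⁻¹) * ∫⁻ z, H z := by
  have hT : Measurable (fun z : E3 × E3 => ((a • z.1, z.2) : E3 × E3)) :=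
    (measurable_fst.const_smul a).prodMk measurable_snd
  have hA : AEMeasurable (fun z : E3 × E3 => H (a • z.1, z.2))
      ((volume : Measure E3).prod volume) := (hH.comp hT).aemeasurable
  rw [Measure.volume_eq_prod, lintegral_prod _ hA, lintegral_prod _ hH.aemeasurable]
  exact lintegral_comp_smul_E3 ha (fun x => ∫⁻ y, H (x, y)) hH.lintegral_prod_right'

lemma gradient_comp_smul {φ : E3 → ℝ} (hφ : ContDiff ℝ 1 φ) (a : ℝ) (x : E3) :
    gradient (fun y => φ (a • y)) x = a • gradient φ (a • x) := by
  have h1 : HasFDerivAt (fun y : E3 => a • y) (a • ContinuousLinearMap.id ℝ E3) x :=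
    (hasFDerivAt_id x).const_smul a
  have h2 : HasFDerivAt φ (fderiv ℝ φ (a • x)) (a • x) :=
    (hφ.differentiable one_ne_zero (a • x)).hasFDerivAt
  have h3 := h2.comp x h1
  have h4 : (fderiv ℝ φ (a • x)).comp (a • ContinuousLinearMap.id ℝ E3)
      = a • fderiv ℝ φ (a • x) := by ext v; simp
  rw [h4] at h3
  have h5 : HasFDerivAt (fun y => φ (a • y)) (a • fderiv ℝ φ (a • x)) x := h3
  rw [h5.hasGradientAt.gradient, _root_.map_smul]
  rfl

lemma lintegral_comp_smul_prodE3' {a : ℝ} (ha : 0 < a) (H : E3 × E3 → ℝ≥0∞) (hH : Measurable H) :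
    ∫⁻ z : E3 × E3, H (a • z.1, z.2) = ENNReal.ofReal ((a ^ 3)⁻¹) * ∫⁻ z, H z :=
  lintegral_comp_smul_prodE3 ha H hH

lemma energy_le_of_admissible {k J M₁ : ℝ} {m : ℝ} (hk : 0 < k) (hk2 : k < 2)
    (hm1 : 1 ≤ m) (f : E3 → E3 → ℝ) (φ : E3 → ℝ) (hadm : Admissible k M₁ J f φ) :
    ∃ g ψ, Admissible k (m * M₁) J g ψ ∧ energy g ψ ≤ ENNReal.ofReal m * energy f φ := by
  obtain ⟨⟨hfm, hfnn, hfmass, hfLp⟩, ⟨hφC, hφgrad, hφvan⟩, hfin⟩ := hadm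
  have hm0 : (0:ℝ) < m := lt_of_lt_of_le one_pos hm1
  set a : ℝ := m ^ (-((k+1)/3)) with ha_def
  set c : ℝ := m ^ (-k) with hc_def
  have ha0 : 0 < a := Real.rpow_pos_of_pos hm0 _
  have hc0 : 0 < c := Real.rpow_pos_of_pos hm0 _
  have hA3 : (a:ℝ) ^ 3 = m ^ (-(k+1)) := by
    rw [ha_def, ← Real.rpow_natCast (m ^ (-((k+1)/3))) 3, ← Real.rpow_mul hm0.le]
    congr 1; push_cast; ring
  have hA : ((a:ℝ) ^ 3)⁻¹ = m ^ (k+1) := by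
    rw [hA3, Real.rpow_neg hm0.le, inv_inv]
  have hca : c * ((a:ℝ) ^ 3)⁻¹ = m := by
    rw [hc_def, hA, ← Real.rpow_add hm0, show -k + (k+1) = 1 by ring, Real.rpow_one]
  have hT : Measurable (fun z : E3 × E3 => ((a • z.1, z.2) : E3 × E3)) :=
    (measurable_fst.const_smul a).prodMk measurable_snd
  set g : E3 → E3 → ℝ := fun x p => c * f (a • x) p with hg_def
  set ψ : E3 → ℝ := fun x => φ (a • x) with hψ_def
  have hfmT : Measurable (fun z : E3 × E3 => f (a • z.1) z.2) := hfm.comp hT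
  have hgm : Measurable (Function.uncurry g) := hfmT.const_mul c
  -- mass
  have hmass : (∫⁻ z : E3 × E3, ENNReal.ofReal (g z.1 z.2)) = ENNReal.ofReal (m * M₁) := by
    calc (∫⁻ z : E3 × E3, ENNReal.ofReal (g z.1 z.2))
        = ∫⁻ z : E3 × E3, ENNReal.ofReal c * ENNReal.ofReal (f (a • z.1) z.2) := by
          simp_rw [hg_def, ENNReal.ofReal_mul hc0.le]
      _ = ENNReal.ofReal c * ∫⁻ z : E3 × E3, ENNReal.ofReal (f (a • z.1) z.2) :=
          lintegral_const_mul _ hfmT.ennreal_ofReal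
      _ = ENNReal.ofReal c * (ENNReal.ofReal ((a ^ 3)⁻¹) *
            ∫⁻ z : E3 × E3, ENNReal.ofReal (f z.1 z.2)) := by
          rw [lintegral_comp_smul_prodE3' ha0 (fun w => ENNReal.ofReal (f w.1 w.2))
            hfm.ennreal_ofReal]
      _ = ENNReal.ofReal (m * M₁) := by
          rw [hfmass, ← mul_assoc, ← ENNReal.ofReal_mul hc0.le, hca,
            ← ENNReal.ofReal_mul hm0.le]
  -- nonnegativity
  have hgnn : ∀ᵐ z : E3 × E3, 0 ≤ g z.1 z.2 := by
    set N : Set (E3 × E3) := {z | f z.1 z.2 < 0} with hN_def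
    have hNmeas : MeasurableSet N := measurableSet_lt hfm measurable_const
    have hN0 : volume N = 0 := by
      rw [ae_iff] at hfnn
      rw [show N = {z : E3 × E3 | ¬ 0 ≤ f z.1 z.2} by ext z; simp [hN_def, not_le]]
      exact hfnn
    have hindm : Measurable (N.indicator (fun _ => (1:ℝ≥0∞))) :=
      measurable_const.indicator hNmeas
    have hind : (∫⁻ z : E3 × E3, N.indicator (fun _ => (1:ℝ≥0∞)) (a • z.1, z.2)) = 0 := by
      rw [lintegral_comp_smul_prodE3' ha0 _ hindm, lintegral_indicator hNmeas]
      simp [hN0]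
    have h0 := (lintegral_eq_zero_iff (hindm.comp hT)).mp hind
    filter_upwards [h0] with z hz
    have hz' : N.indicator (fun _ => (1:ℝ≥0∞)) (a • z.1, z.2) = 0 := hz
    have hfz : 0 ≤ f (a • z.1) z.2 := by
      by_contra hneg
      push_neg at hneg
      have hmem : ((a • z.1, z.2) : E3 × E3) ∈ N := hneg
      rw [Set.indicator_of_mem hmem] at hz'
      exact one_ne_zero hz'
    exact mul_nonneg hc0.le hfz
  -- Lp norm
  have hlp : eLpNorm (Function.uncurry g) (ENNReal.ofReal (1 + 1/k)) volume
      = eLpNorm (Function.uncurry f) (ENNReal.ofReal (1 + 1/k)) volume := by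
    set q := ENNReal.ofReal (1 + 1/k) with hq_def
    have hr0 : (0:ℝ) < 1 + 1/k := by positivity
    have hq0 : q ≠ 0 := (ENNReal.ofReal_pos.2 hr0).ne'
    have hqt : q ≠ ⊤ := ENNReal.ofReal_ne_top
    have hqr : q.toReal = 1 + 1/k := by rw [hq_def]; exact ENNReal.toReal_ofReal hr0.le
    have hug : Function.uncurry g
        = c • (Function.uncurry f ∘ fun z : E3 × E3 => ((a • z.1, z.2) : E3 × E3)) := rfl
    have hmeas : Measurable fun w : E3 × E3 => ((‖Function.uncurry f w‖₊ : ℝ≥0∞) ^ q.toReal) :=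
      hfm.nnnorm.coe_nnreal_ennreal.pow_const _
    rw [hug, eLpNorm_const_smul, eLpNorm_eq_lintegral_rpow_enorm_toReal hq0 hqt,
      eLpNorm_eq_lintegral_rpow_enorm_toReal hq0 hqt]
    simp only [enorm_eq_nnnorm]
    have hcov := lintegral_comp_smul_prodE3' ha0
      (fun w : E3 × E3 => ((‖Function.uncurry f w‖₊ : ℝ≥0∞) ^ q.toReal)) hmeas
    have heq : (∫⁻ z : E3 × E3,
        (‖(Function.uncurry f ∘ fun z : E3 × E3 => ((a • z.1, z.2) : E3 × E3)) z‖₊ : ℝ≥0∞)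
          ^ q.toReal)
        = ENNReal.ofReal ((a ^ 3)⁻¹) *
          ∫⁻ w : E3 × E3, (‖Function.uncurry f w‖₊ : ℝ≥0∞) ^ q.toReal := hcov
    rw [heq, ENNReal.mul_rpow_of_nonneg _ _ (by positivity : (0:ℝ) ≤ 1 / q.toReal),
      ← mul_assoc]
    have hs : (‖c‖₊ : ℝ≥0∞) * ENNReal.ofReal ((a ^ 3)⁻¹) ^ (1 / q.toReal) = 1 := by
      rw [← enorm_eq_nnnorm, Real.enorm_eq_ofReal hc0.le, ENNReal.ofReal_rpow_of_pos (by positivity),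
        ← ENNReal.ofReal_mul hc0.le, hA, hqr, hc_def, ← Real.rpow_mul hm0.le,
        ← Real.rpow_add hm0]
      have hk0' : k ≠ 0 := hk.ne'
      have hexp : -k + (k + 1) * (1 / (1 + 1/k)) = 0 := by field_simp; ring
      rw [hexp, Real.rpow_zero, ENNReal.ofReal_one]
    rw [hs, one_mul]
  -- gradient of ψ
  have hgradcont : Continuous (gradient φ) := by
    show Continuous fun x => (InnerProductSpace.toDual ℝ E3).symm (fderiv ℝ φ x)
    exact (InnerProductSpace.toDual ℝ E3).symm.continuous.comp (hφC.continuous_fderiv one_ne_zero)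
  have hGm : Measurable fun x : E3 => ENNReal.ofReal (‖gradient φ x‖ ^ 2) :=
    ((hgradcont.norm.pow 2).measurable).ennreal_ofReal
  have hψgrad_pt : ∀ x : E3, ENNReal.ofReal (‖gradient ψ x‖ ^ 2)
      = ENNReal.ofReal (a ^ 2) * ENNReal.ofReal (‖gradient φ (a • x)‖ ^ 2) := by
    intro x
    rw [← ENNReal.ofReal_mul (by positivity)]
    congr 1
    rw [hψ_def, gradient_comp_smul hφC, norm_smul, Real.norm_eq_abs, mul_pow, sq_abs]
  have ha2A : (a:ℝ) ^ 2 * ((a:ℝ) ^ 3)⁻¹ = m ^ ((k+1)/3) := by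
    rw [hA, ha_def, ← Real.rpow_natCast (m ^ (-((k+1)/3))) 2, ← Real.rpow_mul hm0.le,
      ← Real.rpow_add hm0]
    congr 1; push_cast; ring
  have hgradint : (∫⁻ x : E3, ENNReal.ofReal (‖gradient ψ x‖ ^ 2))
      = ENNReal.ofReal (m ^ ((k+1)/3)) * ∫⁻ x : E3, ENNReal.ofReal (‖gradient φ x‖ ^ 2) := by
    calc (∫⁻ x : E3, ENNReal.ofReal (‖gradient ψ x‖ ^ 2))
        = ∫⁻ x : E3, ENNReal.ofReal (a ^ 2) * ENNReal.ofReal (‖gradient φ (a • x)‖ ^ 2) := by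
          simp_rw [hψgrad_pt]
      _ = ENNReal.ofReal (a ^ 2) * ∫⁻ x : E3, ENNReal.ofReal (‖gradient φ (a • x)‖ ^ 2) :=
          lintegral_const_mul _ (hGm.comp (measurable_const_smul a))
      _ = ENNReal.ofReal (a ^ 2) * (ENNReal.ofReal ((a ^ 3)⁻¹) *
            ∫⁻ x : E3, ENNReal.ofReal (‖gradient φ x‖ ^ 2)) := by
          rw [lintegral_comp_smul_E3 ha0 _ hGm]
      _ = _ := by
          rw [← mul_assoc, ← ENNReal.ofReal_mul (by positivity), ha2A]
  -- potential ψ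
  have hψC : ContDiff ℝ 1 ψ := hφC.comp (contDiff_const_smul a)
  have hψgr : (∫⁻ x : E3, ENNReal.ofReal (‖gradient ψ x‖ ^ 2)) < ⊤ := by
    rw [hgradint]
    exact ENNReal.mul_lt_top ENNReal.ofReal_lt_top hφgrad
  have hψvan : ∀ α : ℝ, 0 < α → volume {x : E3 | α < |ψ x|} < ⊤ := by
    intro α hα
    have hset : {x : E3 | α < |ψ x|} = (fun x : E3 => a • x) ⁻¹' {x : E3 | α < |φ x|} := by
      ext x; simp [hψ_def]
    rw [hset, Measure.addHaar_preimage_smul volume ha0.ne']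
    exact ENNReal.mul_lt_top ENNReal.ofReal_lt_top (hφvan α hα)
  -- kinetic energy
  have hcont2 : Continuous fun w : E3 × E3 =>
      Real.sqrt (Real.exp (2 * φ w.1) + ‖w.2‖ ^ 2) :=
    (((Real.continuous_exp.comp (continuous_const.mul
      (hφC.continuous.comp continuous_fst))).add ((continuous_snd.norm).pow 2))).sqrt
  have hH2 : Measurable fun w : E3 × E3 =>
      ENNReal.ofReal (Real.sqrt (Real.exp (2 * φ w.1) + ‖w.2‖ ^ 2) * f w.1 w.2) :=
    (hcont2.measurable.mul hfm).ennreal_ofReal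
  have hK : kinE g ψ = ENNReal.ofReal m * kinE f φ := by
    calc kinE g ψ
        = ∫⁻ z : E3 × E3, ENNReal.ofReal c * (fun w : E3 × E3 =>
            ENNReal.ofReal (Real.sqrt (Real.exp (2 * φ w.1) + ‖w.2‖ ^ 2) * f w.1 w.2))
            (a • z.1, z.2) := by
          refine lintegral_congr fun z => ?_
          show ENNReal.ofReal (Real.sqrt (Real.exp (2 * ψ z.1) + ‖z.2‖ ^ 2) * g z.1 z.2) = _
          simp only [hg_def, hψ_def]
          rw [← ENNReal.ofReal_mul hc0.le]
          congr 1
          ring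
      _ = ENNReal.ofReal c * ∫⁻ z : E3 × E3, (fun w : E3 × E3 =>
            ENNReal.ofReal (Real.sqrt (Real.exp (2 * φ w.1) + ‖w.2‖ ^ 2) * f w.1 w.2))
            (a • z.1, z.2) := lintegral_const_mul _ (hH2.comp hT)
      _ = ENNReal.ofReal c * (ENNReal.ofReal ((a ^ 3)⁻¹) * kinE f φ) := by
          rw [lintegral_comp_smul_prodE3' ha0 _ hH2]; rfl
      _ = ENNReal.ofReal m * kinE f φ := by
          rw [← mul_assoc, ← ENNReal.ofReal_mul hc0.le, hca]
  -- finiteness constraint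
  have hH1 : Measurable fun w : E3 × E3 =>
      ENNReal.ofReal (Real.sqrt (1 + ‖w.2‖ ^ 2) * f w.1 w.2) :=
    (((continuous_const.add ((continuous_snd.norm).pow 2)).sqrt).measurable.mul
      hfm).ennreal_ofReal
  have hfin2 : (∫⁻ z : E3 × E3, ENNReal.ofReal (Real.sqrt (1 + ‖z.2‖ ^ 2) * g z.1 z.2)) < ⊤ := by
    have hcalc : (∫⁻ z : E3 × E3, ENNReal.ofReal (Real.sqrt (1 + ‖z.2‖ ^ 2) * g z.1 z.2))
        = ENNReal.ofReal m *
          ∫⁻ z : E3 × E3, ENNReal.ofReal (Real.sqrt (1 + ‖z.2‖ ^ 2) * f z.1 z.2) := by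
      calc (∫⁻ z : E3 × E3, ENNReal.ofReal (Real.sqrt (1 + ‖z.2‖ ^ 2) * g z.1 z.2))
          = ∫⁻ z : E3 × E3, ENNReal.ofReal c * (fun w : E3 × E3 =>
              ENNReal.ofReal (Real.sqrt (1 + ‖w.2‖ ^ 2) * f w.1 w.2)) (a • z.1, z.2) := by
            refine lintegral_congr fun z => ?_
            show ENNReal.ofReal (Real.sqrt (1 + ‖z.2‖ ^ 2) * g z.1 z.2) = _
            simp only [hg_def]
            rw [← ENNReal.ofReal_mul hc0.le]
            congr 1
            ring
        _ = ENNReal.ofReal c * ∫⁻ z : E3 × E3, (fun w : E3 × E3 =>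
              ENNReal.ofReal (Real.sqrt (1 + ‖w.2‖ ^ 2) * f w.1 w.2)) (a • z.1, z.2) :=
            lintegral_const_mul _ (hH1.comp hT)
        _ = ENNReal.ofReal c * (ENNReal.ofReal ((a ^ 3)⁻¹) *
              ∫⁻ z : E3 × E3, ENNReal.ofReal (Real.sqrt (1 + ‖z.2‖ ^ 2) * f z.1 z.2)) := by
            rw [lintegral_comp_smul_prodE3' ha0 _ hH1]
        _ = _ := by rw [← mul_assoc, ← ENNReal.ofReal_mul hc0.le, hca]
    rw [hcalc]
    exact ENNReal.mul_lt_top ENNReal.ofReal_lt_top hfin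
  -- energy inequality
  have hle : m ^ ((k+1)/3) ≤ m := by
    nth_rw 2 [← Real.rpow_one m]
    exact Real.rpow_le_rpow_of_exponent_le hm1 (by linarith)
  have hen : energy g ψ ≤ ENNReal.ofReal m * energy f φ := by
    simp only [energy]
    rw [hK, hgradint, mul_add]
    refine add_le_add_right ?_ _
    rw [mul_div_assoc]
    exact mul_le_mul_left (ENNReal.ofReal_le_ofReal hle) _
  exact ⟨g, ψ, ⟨⟨hgm, hgnn, hmass, hlp ▸ hfLp⟩, ⟨hψC, hψgr, hψvan⟩, hfin2⟩, hen⟩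


end AuxScaling

/-- scaling inequality `I^k_{M₂,J} ≤ (M₂/M₁) I^k_{M₁,J}` for `0 < M₁ ≤ M₂`. -/
theorem energyInf_scaling (k J M₁ M₂ : ℝ) (hk : 0 < k) (hk2 : k < 2) (hJ : 0 < J)
    (hM₁ : 0 < M₁) (hM : M₁ ≤ M₂) :
    energyInf k M₂ J ≤ ENNReal.ofReal (M₂ / M₁) * energyInf k M₁ J := by
  set m := M₂ / M₁ with hm_def
  have hm0 : 0 < m := div_pos (lt_of_lt_of_le hM₁ hM) hM₁
  have hm1 : 1 ≤ m := (one_le_div hM₁).2 hM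
  have hMM : m * M₁ = M₂ := div_mul_cancel₀ _ (ne_of_gt hM₁)
  have key : ∀ f φ, Admissible k M₁ J f φ →
      energyInf k M₂ J ≤ ENNReal.ofReal m * energy f φ := by
    intro f φ hadm
    obtain ⟨g, ψ, hadm2, hle⟩ := energy_le_of_admissible hk hk2 hm1 f φ hadm
    rw [hMM] at hadm2
    exact le_trans (sInf_le ⟨g, ψ, hadm2, rfl⟩) hle
  have hne : ENNReal.ofReal m ≠ 0 := (ENNReal.ofReal_pos.2 hm0).ne'
  rw [mul_comm, ← ENNReal.div_le_iff_le_mul (Or.inl hne) (Or.inl ENNReal.ofReal_ne_top)]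
  refine le_sInf fun e he => ?_
  obtain ⟨f, φ, hadm, rfl⟩ := he
  rw [ENNReal.div_le_iff_le_mul (Or.inl hne) (Or.inl ENNReal.ofReal_ne_top), mul_comm]
  exact key f φ hadm
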